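/- Every positive-integer solution (A,B,C) of A² + B² + C² + 2AB + 2AC = 7ABC can be obtained from (1,1,1) by a finite sequence of the maps τ₁(A,B,C) = ((B²+C²)/A, B, C), τ₂(A,B,C) = (A, (A+C)²/B, C), τ₃(A,B,C) = (A, B, (A+B)²/C), and moreover each intermediate triple has its second and third coordinates perfect squares (starting from step 1). -/

import Mathlib

set_option maxHeartbeats 1000000


def auxTau1 (p : ℤ × ℤ × ℤ) : ℤ × ℤ × ℤ :=
  ((p.2.1 ^ 2 + p.2.2 ^ 2) / p.1, p.2.1, p.2.2)
def auxTau2 (p : ℤ × ℤ × ℤ) : ℤ × ℤ × ℤ :=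
  (p.1, (p.1 + p.2.2) ^ 2 / p.2.1, p.2.2)
def auxTau3 (p : ℤ × ℤ × ℤ) : ℤ × ℤ × ℤ :=
  (p.1, p.2.1, (p.1 + p.2.1) ^ 2 / p.2.2)



lemma sq_of (b X D : ℤ) (hb : b ≠ 0) (h : (b * b) * X = D ^ 2) : IsSquare X := by
  have hdvd : b ^ 2 ∣ D ^ 2 := ⟨X, by linarith [h]⟩
  have hbd : b ∣ D := by
    rwa [Int.pow_dvd_pow_iff (by norm_num : 2 ≠ 0)] at hdvd
  obtain ⟨k, hk⟩ := hbd
  refine ⟨k, ?_⟩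
  have hb2 : b * b ≠ 0 := mul_ne_zero hb hb
  apply mul_left_cancel₀ hb2
  rw [h, hk]; ring

lemma base (A B C : ℤ) (hA : 0 < A) (hB : 0 < B) (hC : 0 < C)
    (h : A ^ 2 + B ^ 2 + C ^ 2 + 2 * A * B + 2 * A * C = 7 * A * B * C)
    (h1 : A ≤ 7*B*C - 2*B - 2*C - A)
    (h2 : B ≤ 7*A*C - 2*A - B)
    (h3 : C ≤ 7*A*B - 2*A - C) :
    A = 1 ∧ B = 1 ∧ C = 1 := by
  have hB2 : B ≤ A + C := by nlinarith [mul_le_mul_of_nonneg_left h2 hB.le]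
  have hC2 : C ≤ A + B := by nlinarith [mul_le_mul_of_nonneg_left h3 hC.le]
  have hA2 : A^2 ≤ B^2 + C^2 := by nlinarith [mul_le_mul_of_nonneg_left h1 hA.le]
  have hbc : (B - C)^2 ≤ A^2 := by nlinarith
  have heq2 : (A+B+C)^2 = B*C*(7*A+2) := by linarith
  -- Step 2: B + C ≤ A + 1
  have hS : B + C ≤ A + 1 := by
    by_contra hcon
    push_neg at hcon
    have hx : A + 2 ≤ B + C := by linarith
    have h4P : (B+C)^2 - A^2 ≤ 4*(B*C) := by nlinarith
    have key : (B+C-A) * ((A+B+C) * (7*A+2)) ≤ 4*(A+B+C)^2 := by nlinarith [mul_le_mul_of_nonneg_right h4P (by positivity : (0:ℤ) ≤ 7*A+2)]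
    have hpos : (0:ℤ) < A+B+C := by linarith
    have key2 : (B+C-A) * (7*A+2) ≤ 4*(A+B+C) := by
      by_contra hcon2
      push_neg at hcon2
      have := mul_lt_mul_of_pos_left hcon2 hpos
      nlinarith [key, this]
    linarith [key2, mul_nonneg (by linarith : (0:ℤ) ≤ A - 1) (by linarith : (0:ℤ) ≤ B + C - A - 2)]
  -- Step 3: A ≤ B + C - 1
  have hP1 : B + C - 1 ≤ B*C := by nlinarith [mul_nonneg (by linarith : (0:ℤ) ≤ B - 1) (by linarith : (0:ℤ) ≤ C - 1)]
  have hup : A^2 ≤ (B+C-1)^2 + 1 := by nlinarith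
  have hAle : A ≤ B + C - 1 := by
    by_contra hcon
    push_neg at hcon
    have h9 : (B+C-1)^2 ≤ (A-1)^2 := by
      have := pow_le_pow_left₀ (by linarith : (0:ℤ) ≤ B + C - 1) (by linarith : B + C - 1 ≤ A - 1) 2
      exact this
    nlinarith [hup, h9]
  have hSA : B + C = A + 1 := by omega
  have hCval : C = A + 1 - B := by omega
  subst hCval
  have hPA : B * (A + 1 - B) = A := by nlinarith [hA2, hP1]
  have hA1 : A = 1 := by nlinarith [heq2, hPA, mul_nonneg (by linarith : (0:ℤ) ≤ 3*A+1) (by linarith : (0:ℤ) ≤ A - 1)]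
  subst hA1
  have hBv : B = 1 := by nlinarith [hPA]
  subst hBv
  exact ⟨rfl, rfl, by ring⟩


lemma step (A B C : ℤ) (hA : 0 < A) (hB : 0 < B) (hC : 0 < C)
    (h : A ^ 2 + B ^ 2 + C ^ 2 + 2 * A * B + 2 * A * C = 7 * A * B * C)
    (hne : ¬(A = 1 ∧ B = 1 ∧ C = 1)) :
    (∃ A', 0 < A' ∧ A' < A ∧
      A' ^ 2 + B ^ 2 + C ^ 2 + 2 * A' * B + 2 * A' * C = 7 * A' * B * C ∧
      auxTau1 (A', B, C) = (A, B, C)) ∨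
    (∃ B', 0 < B' ∧ B' < B ∧
      A ^ 2 + B' ^ 2 + C ^ 2 + 2 * A * B' + 2 * A * C = 7 * A * B' * C ∧
      auxTau2 (A, B', C) = (A, B, C)) ∨
    (∃ C', 0 < C' ∧ C' < C ∧
      A ^ 2 + B ^ 2 + C' ^ 2 + 2 * A * B + 2 * A * C' = 7 * A * B * C' ∧
      auxTau3 (A, B, C') = (A, B, C)) := by
  have hdich : 7*B*C - 2*B - 2*C - A < A ∨ 7*A*C - 2*A - B < B ∨ 7*A*B - 2*A - C < C := by
    by_contra hcon
    push_neg at hcon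
    exact hne (base A B C hA hB hC h (by linarith [hcon.1]) (by linarith [hcon.2.1])
      (by linarith [hcon.2.2]))
  rcases hdich with h1 | h2 | h3
  · left
    set A' := 7*B*C - 2*B - 2*C - A with hA'def
    have hprod : A' * A = B ^ 2 + C ^ 2 := by simp only [hA'def]; ring_nf; nlinarith [h]
    have hpos : 0 < A' := by
      rcases lt_trichotomy A' 0 with hneg | hz | hp
      · nlinarith
      · nlinarith
      · exact hp
    refine ⟨A', hpos, h1, by linear_combination h, ?_⟩
    simp only [auxTau1]
    rw [← hprod, Int.mul_ediv_cancel_left _ (ne_of_gt hpos)]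
  · right; left
    set B' := 7*A*C - 2*A - B with hB'def
    have hprod : B' * B = (A + C) ^ 2 := by simp only [hB'def]; nlinarith [h]
    have hpos : 0 < B' := by
      rcases lt_trichotomy B' 0 with hneg | hz | hp
      · nlinarith
      · nlinarith
      · exact hp
    refine ⟨B', hpos, h2, by linear_combination h, ?_⟩
    simp only [auxTau2]
    rw [← hprod, Int.mul_ediv_cancel_left _ (ne_of_gt hpos)]
  · right; right
    set C' := 7*A*B - 2*A - C with hC'def
    have hprod : C' * C = (A + B) ^ 2 := by simp only [hC'def]; nlinarith [h]
    have hpos : 0 < C' := by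
      rcases lt_trichotomy C' 0 with hneg | hz | hp
      · nlinarith
      · nlinarith
      · exact hp
    refine ⟨C', hpos, h3, by linear_combination h, ?_⟩
    simp only [auxTau3]
    rw [← hprod, Int.mul_ediv_cancel_left _ (ne_of_gt hpos)]

lemma extend (l : List (ℤ × ℤ × ℤ → ℤ × ℤ × ℤ)) (g : ℤ × ℤ × ℤ → ℤ × ℤ × ℤ)
    (P Q : ℤ × ℤ × ℤ)
    (hg : g = auxTau1 ∨ g = auxTau2 ∨ g = auxTau3)
    (hl1 : ∀ f ∈ l, f = auxTau1 ∨ f = auxTau2 ∨ f = auxTau3)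
    (hl2 : l.foldl (fun p f => f p) (1, 1, 1) = P)
    (hl3 : ∀ n, 1 ≤ n → n ≤ l.length →
        IsSquare ((l.take n).foldl (fun p f => f p) (1, 1, 1)).2.1 ∧
        IsSquare ((l.take n).foldl (fun p f => f p) (1, 1, 1)).2.2)
    (htau : g P = Q) (hq1 : IsSquare Q.2.1) (hq2 : IsSquare Q.2.2) :
    (∀ f ∈ l ++ [g], f = auxTau1 ∨ f = auxTau2 ∨ f = auxTau3) ∧
    ((l ++ [g]).foldl (fun p f => f p) (1, 1, 1) = Q) ∧
    ∀ n, 1 ≤ n → n ≤ (l ++ [g]).length →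
        IsSquare (((l ++ [g]).take n).foldl (fun p f => f p) (1, 1, 1)).2.1 ∧
        IsSquare (((l ++ [g]).take n).foldl (fun p f => f p) (1, 1, 1)).2.2 := by
  have hfold : (l ++ [g]).foldl (fun p f => f p) (1, 1, 1) = Q := by
    rw [List.foldl_append, hl2]; simpa using htau
  refine ⟨?_, hfold, ?_⟩
  · intro f hf
    rcases List.mem_append.1 hf with hf | hf
    · exact hl1 f hf
    · simp at hf; subst hf; exact hg
  · intro n h1 h2
    simp only [List.length_append, List.length_singleton] at h2
    rcases Nat.lt_or_ge n (l.length + 1) with hlt | hge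
    · have hle : n ≤ l.length := by omega
      rw [List.take_append_of_le_length hle]
      exact hl3 n h1 hle
    · have hn : (l ++ [g]).length ≤ n := by simp; omega
      rw [List.take_of_length_le hn, hfold]
      exact ⟨hq1, hq2⟩

lemma main : ∀ n : ℕ, ∀ A B C : ℤ, 0 < A → 0 < B → 0 < C →
    A ^ 2 + B ^ 2 + C ^ 2 + 2 * A * B + 2 * A * C = 7 * A * B * C →
    A + B + C ≤ (n : ℤ) →
    IsSquare B ∧ IsSquare C ∧
    ∃ l : List (ℤ × ℤ × ℤ → ℤ × ℤ × ℤ),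
      (∀ f ∈ l, f = auxTau1 ∨ f = auxTau2 ∨ f = auxTau3) ∧
      l.foldl (fun p f => f p) (1, 1, 1) = (A, B, C) ∧
      ∀ n', 1 ≤ n' → n' ≤ l.length →
        IsSquare ((l.take n').foldl (fun p f => f p) (1, 1, 1)).2.1 ∧
        IsSquare ((l.take n').foldl (fun p f => f p) (1, 1, 1)).2.2 := by
  intro n
  induction n using Nat.strong_induction_on with
  | _ n ih =>
  intro A B C hA hB hC h hsum
  have hn3 : 3 ≤ n := by
    have : (3:ℤ) ≤ (n:ℤ) := by linarith
    exact_mod_cast this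
  by_cases hbase : A = 1 ∧ B = 1 ∧ C = 1
  · obtain ⟨e1, e2, e3⟩ := hbase; subst e1; subst e2; subst e3
    refine ⟨IsSquare.one, IsSquare.one, [], by simp, rfl, ?_⟩
    intro n' h1 h2; simp at h2; omega
  · have hmlt : n - 1 < n := by omega
    rcases step A B C hA hB hC h hbase with
      ⟨A', hp, hlt, heq, htau⟩ | ⟨B', hp, hlt, heq, htau⟩ | ⟨C', hp, hlt, heq, htau⟩
    · have hsum' : A' + B + C ≤ ((n - 1 : ℕ) : ℤ) := by
        have : ((n - 1 : ℕ) : ℤ) = (n : ℤ) - 1 := by omega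
        omega
      obtain ⟨sq1, sq2, l, hl1, hl2, hl3⟩ := ih (n - 1) hmlt A' B C hp hB hC heq hsum'
      obtain ⟨e1, e2, e3⟩ := extend l auxTau1 (A', B, C) (A, B, C) (Or.inl rfl)
        hl1 hl2 hl3 htau sq1 sq2
      exact ⟨sq1, sq2, l ++ [auxTau1], e1, e2, e3⟩
    · have hsum' : A + B' + C ≤ ((n - 1 : ℕ) : ℤ) := by
        have : ((n - 1 : ℕ) : ℤ) = (n : ℤ) - 1 := by omega
        omega
      obtain ⟨sq1, sq2, l, hl1, hl2, hl3⟩ := ih (n - 1) hmlt A B' C hA hp hC heq hsum'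
      -- B' * B = (A+C)^2
      have hq : B' * (7*A*C - 2*A - B') = (A + C) ^ 2 := by linarith [heq]
      have hBval : B = 7*A*C - 2*A - B' := by
        have h21 := congrArg (fun p => p.2.1) htau
        simp only [auxTau2] at h21
        rw [← hq, Int.mul_ediv_cancel_left _ (ne_of_gt hp)] at h21
        exact h21.symm
      have hprodB : B' * B = (A + C) ^ 2 := by rw [hBval]; exact hq
      obtain ⟨b, hbb⟩ := sq1
      have hb0 : b ≠ 0 := by
        intro hz; rw [hz, mul_zero] at hbb; omega
      have sqB : IsSquare B := sq_of b B (A + C) hb0 (by rw [← hbb]; exact hprodB)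
      obtain ⟨e1, e2, e3⟩ := extend l auxTau2 (A, B', C) (A, B, C) (Or.inr (Or.inl rfl))
        hl1 hl2 hl3 htau sqB sq2
      exact ⟨sqB, sq2, l ++ [auxTau2], e1, e2, e3⟩
    · have hsum' : A + B + C' ≤ ((n - 1 : ℕ) : ℤ) := by
        have : ((n - 1 : ℕ) : ℤ) = (n : ℤ) - 1 := by omega
        omega
      obtain ⟨sq1, sq2, l, hl1, hl2, hl3⟩ := ih (n - 1) hmlt A B C' hA hB hp heq hsum'
      have hq : C' * (7*A*B - 2*A - C') = (A + B) ^ 2 := by linarith [heq]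
      have hCval : C = 7*A*B - 2*A - C' := by
        have h22 := congrArg (fun p => p.2.2) htau
        simp only [auxTau3] at h22
        rw [← hq, Int.mul_ediv_cancel_left _ (ne_of_gt hp)] at h22
        exact h22.symm
      have hprodC : C' * C = (A + B) ^ 2 := by rw [hCval]; exact hq
      obtain ⟨c, hcc⟩ := sq2
      have hc0 : c ≠ 0 := by
        intro hz; rw [hz, mul_zero] at hcc; omega
      have sqC : IsSquare C := sq_of c C (A + B) hc0 (by rw [← hcc]; exact hprodC)
      obtain ⟨e1, e2, e3⟩ := extend l auxTau3 (A, B, C') (A, B, C) (Or.inr (Or.inr rfl))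
        hl1 hl2 hl3 htau sq1 sqC
      exact ⟨sq1, sqC, l ++ [auxTau3], e1, e2, e3⟩


/-- Every positive-integer solution of `A² + B² + C² + 2AB + 2AC = 7ABC` is
obtained from `(1,1,1)` by a finite sequence of the maps `τ₁, τ₂, τ₃`, and every
intermediate triple (from step 1 on) has second and third coordinates perfect
squares. -/
theorem aux_theorem (A B C : ℤ) (hA : 0 < A) (hB : 0 < B) (hC : 0 < C)
    (h : A ^ 2 + B ^ 2 + C ^ 2 + 2 * A * B + 2 * A * C = 7 * A * B * C) :
    ∃ l : List (ℤ × ℤ × ℤ → ℤ × ℤ × ℤ),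
      (∀ f ∈ l, f = auxTau1 ∨ f = auxTau2 ∨ f = auxTau3) ∧
      l.foldl (fun p f => f p) (1, 1, 1) = (A, B, C) ∧
      ∀ n, 1 ≤ n → n ≤ l.length →
        IsSquare ((l.take n).foldl (fun p f => f p) (1, 1, 1)).2.1 ∧
        IsSquare ((l.take n).foldl (fun p f => f p) (1, 1, 1)).2.2 := by
  obtain ⟨-, -, l, h1, h2, h3⟩ := main (A + B + C).toNat A B C hA hB hC h
    (by rw [Int.toNat_of_nonneg (by linarith)])
  exact ⟨l, h1, h2, h3⟩
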